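/- Let n be squarefree and z-smooth for some z ≥ y ≥ 1, and suppose the product of the primes p | n with p ≤ y is at least zⁱ/y. Then n is i-tuply y-densely divisible. -/

import Mathlib

/-- `DD y i n` : `n` is `i`-tuply `y`-densely divisible (Definition 2.1 of Polymath8a). -/
def DD (y : ℝ) : ℕ → ℕ → Prop
  | 0, _ => True
  | (i + 1), n => ∀ j k : ℕ, j + k = i → ∀ R : ℝ, 1 ≤ R → R ≤ y * n →
      ∃ q r : ℕ, n = q * r ∧ y⁻¹ * R ≤ (r : ℝ) ∧ (r : ℝ) ≤ R ∧ DD y j q ∧ DD y k r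
termination_by i n => i
decreasing_by all_goals omega

section Aux

open scoped Classical

/-- Lemma A: a `y`-smooth squarefree number has a divisor in any window `[B/y, B]`. -/
private lemma dd_lemA (y : ℝ) (hy : 1 ≤ y) (B : ℝ) (hB1 : 1 ≤ B) :
    ∀ m : ℕ, Squarefree m → (∀ p : ℕ, p.Prime → p ∣ m → (p : ℝ) ≤ y) → B ≤ y * m →
    ∃ w : ℕ, w ∣ m ∧ y⁻¹ * B ≤ (w : ℝ) ∧ (w : ℝ) ≤ B := by
  intro m
  induction m using Nat.strong_induction_on with
  | _ m IH =>
    intro hm hsm hB2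
    by_cases h : (m : ℝ) ≤ B
    · exact ⟨m, dvd_rfl, by rw [inv_mul_le_iff₀ (by linarith)]; exact hB2, h⟩
    · push_neg at h
      have hm1 : 1 < m := by exact_mod_cast lt_of_le_of_lt hB1 h
      have hp : m.minFac.Prime := Nat.minFac_prime (by omega)
      obtain ⟨m', hm'⟩ : m.minFac ∣ m := Nat.minFac_dvd m
      have hm'dvd : m' ∣ m := ⟨m.minFac, by rw [mul_comm] at hm'; exact hm'⟩
      have hm'0 : m' ≠ 0 := by rintro rfl; rw [mul_zero] at hm'; omega
      have hlt : m' < m := by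
        have h2 := hp.two_le
        calc m' < 2 * m' := by omega
        _ ≤ m.minFac * m' := Nat.mul_le_mul_right _ h2
        _ = m := hm'.symm
      have hpy : (m.minFac : ℝ) ≤ y := hsm _ hp (Nat.minFac_dvd m)
      have hcast : (m : ℝ) = (m.minFac : ℝ) * m' := by exact_mod_cast congrArg Nat.cast hm'
      have hB2' : B ≤ y * m' := by
        have h1 : (m.minFac : ℝ) * m' ≤ y * m' :=
          mul_le_mul_of_nonneg_right hpy (Nat.cast_nonneg _)
        linarith [hcast ▸ h]
      obtain ⟨w, hw, h1, h2⟩ := IH m' hlt (hm.squarefree_of_dvd hm'dvd)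
        (fun p hp' hd => hsm p hp' (hd.trans hm'dvd)) hB2'
      exact ⟨w, hw.trans hm'dvd, h1, h2⟩

/-- Lemma B: glue lemma. If `a` is `y`-smooth and every prime of `b` is at most `y * a`,
then `a * b` has a divisor in any window `[B/y, B]`. -/
private lemma dd_lemB (y : ℝ) (hy : 1 ≤ y) (a : ℕ) :
    ∀ b : ℕ, Squarefree (a * b) → (∀ p : ℕ, p.Prime → p ∣ a → (p : ℝ) ≤ y) →
    (∀ p : ℕ, p.Prime → p ∣ b → (p : ℝ) ≤ y * a) →
    ∀ B : ℝ, 1 ≤ B → B ≤ y * (a * b) →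
    ∃ w : ℕ, w ∣ a * b ∧ y⁻¹ * B ≤ (w : ℝ) ∧ (w : ℝ) ≤ B := by
  intro b
  induction b using Nat.strong_induction_on with
  | _ b IH =>
    intro hab hsa hsb B hB1 hB2
    by_cases h : B ≤ y * a
    · obtain ⟨w, hw, h1, h2⟩ := dd_lemA y hy B hB1 a
        (hab.squarefree_of_dvd (dvd_mul_right a b)) hsa h
      exact ⟨w, hw.trans (dvd_mul_right a b), h1, h2⟩
    · push_neg at h
      have ha0 : a ≠ 0 := by rintro rfl; simp at hab
      have hb0 : b ≠ 0 := by rintro rfl; simp at hab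
      have hb1 : b ≠ 1 := by
        rintro rfl
        norm_num at hB2; linarith
      have hp : b.minFac.Prime := Nat.minFac_prime hb1
      obtain ⟨b', hb'⟩ : b.minFac ∣ b := Nat.minFac_dvd b
      have hb'dvd : b' ∣ b := ⟨b.minFac, by rw [mul_comm] at hb'; exact hb'⟩
      have hb'0 : b' ≠ 0 := by rintro rfl; rw [mul_zero] at hb'; exact hb0 hb'
      have hlt : b' < b := by
        have h2 := hp.two_le
        calc b' < 2 * b' := by omega
        _ ≤ b.minFac * b' := Nat.mul_le_mul_right _ h2
        _ = b := hb'.symm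
      have hpy : (b.minFac : ℝ) ≤ y * a := hsb _ hp (Nat.minFac_dvd b)
      have hppos : (0:ℝ) < b.minFac := by exact_mod_cast hp.pos
      have habdvd : a * b' ∣ a * b := mul_dvd_mul_left a hb'dvd
      have hB1' : 1 ≤ B / b.minFac := by
        rw [le_div_iff₀ hppos]; linarith
      have hB2' : B / b.minFac ≤ y * (a * b') := by
        rw [div_le_iff₀ hppos]
        have hbcast : (b : ℝ) = (b.minFac : ℝ) * b' := by exact_mod_cast congrArg Nat.cast hb'
        have : (y * ((a:ℝ) * b')) * b.minFac = y * ((a:ℝ) * b) := by rw [hbcast]; ring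
        linarith [this ▸ hB2]
      obtain ⟨w, hw, h1, h2⟩ := IH b' hlt (hab.squarefree_of_dvd habdvd) hsa
        (fun p hp' hd => hsb p hp' (hd.trans hb'dvd)) _ hB1' hB2'
      have hBp : B / (b.minFac:ℝ) * (b.minFac:ℝ) = B := div_mul_cancel₀ B (ne_of_gt hppos)
      refine ⟨b.minFac * w, ?_, ?_, ?_⟩
      · have heq : a * b = b.minFac * (a * b') := by
          conv_lhs => rw [hb']
          ring
        rw [heq]; exact mul_dvd_mul_left _ hw
      · have h1' : y⁻¹ * (B / (b.minFac:ℝ)) * (b.minFac:ℝ) ≤ (w:ℝ) * b.minFac :=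
          mul_le_mul_of_nonneg_right h1 hppos.le
        rw [mul_assoc, hBp] at h1'
        push_cast
        linarith
      · rw [le_div_iff₀ hppos] at h2
        push_cast
        linarith

/-- The product of the primes `p ∣ m` with `p ≤ y`. -/
noncomputable def smallProd (y : ℝ) (m : ℕ) : ℕ :=
  (m.primeFactors.filter (fun p : ℕ => (p : ℝ) ≤ y)).prod id

private lemma smallProd_pos (y : ℝ) (m : ℕ) : 0 < smallProd y m :=
  Finset.prod_pos fun p hp =>
    (Nat.prime_of_mem_primeFactors (Finset.mem_filter.mp hp).1).pos

private lemma smallProd_dvd (y : ℝ) (m : ℕ) : smallProd y m ∣ m :=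
  (Finset.prod_dvd_prod_of_subset _ _ _ (Finset.filter_subset _ _)).trans
    (Nat.prod_primeFactors_dvd m)

private lemma smallProd_smooth (y : ℝ) (m : ℕ) :
    ∀ p : ℕ, p.Prime → p ∣ smallProd y m → (p : ℝ) ≤ y := by
  intro p hp hd
  obtain ⟨q, hq, hpq⟩ := hp.prime.exists_mem_finset_dvd hd
  obtain ⟨hq1, hq2⟩ := Finset.mem_filter.mp hq
  have : p = q :=
    ((Nat.prime_of_mem_primeFactors hq1).eq_one_or_self_of_dvd p hpq).resolve_left hp.ne_one
  rw [this]; exact hq2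

/-- Lemma E: a `y`-smooth squarefree divisor of `m` divides `smallProd y m`. -/
private lemma dd_lemE (y : ℝ) (d m : ℕ) (hdm : d ∣ m) (hm : m ≠ 0) (hd : Squarefree d)
    (hsm : ∀ p : ℕ, p.Prime → p ∣ d → (p : ℝ) ≤ y) : d ∣ smallProd y m := by
  have hsub : d.primeFactors ⊆ m.primeFactors.filter (fun p : ℕ => (p : ℝ) ≤ y) := by
    intro p hp
    rw [Nat.mem_primeFactors] at hp
    obtain ⟨hp1, hp2, _⟩ := hp
    rw [Finset.mem_filter, Nat.mem_primeFactors]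
    exact ⟨⟨hp1, hp2.trans hdm, hm⟩, hsm p hp1 hp2⟩
  rw [smallProd, ← Nat.prod_primeFactors_of_squarefree hd]
  exact Finset.prod_dvd_prod_of_subset _ _ _ hsub

private lemma dd_lemE' (y z : ℝ) (hy : 0 < y) (d m : ℕ) (hdm : d ∣ m) (hm : m ≠ 0)
    (hd : Squarefree d) (hsm : ∀ p : ℕ, p.Prime → p ∣ d → (p : ℝ) ≤ y)
    (hlow : y⁻¹ * z ≤ (d : ℝ)) : z / y ≤ (smallProd y m : ℝ) := by
  have h1 : (d : ℝ) ≤ smallProd y m := by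
    exact_mod_cast Nat.le_of_dvd (smallProd_pos y m) (dd_lemE y d m hdm hm hd hsm)
  rw [div_eq_inv_mul]
  linarith

/-- Lemma C: squarefree `y`-smooth numbers are `i`-tuply `y`-densely divisible for every `i`. -/
private lemma dd_lemC (y : ℝ) (hy : 1 ≤ y) :
    ∀ i : ℕ, ∀ m : ℕ, Squarefree m → (∀ p : ℕ, p.Prime → p ∣ m → (p : ℝ) ≤ y) → DD y i m := by
  intro i
  induction i using Nat.strong_induction_on with
  | _ i IH =>
    match i with
    | 0 => intro m _ _; rw [DD]; trivial
    | (i+1) =>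
      intro m hm hsm
      rw [DD]
      intro j k hjk R hR1 hR2
      obtain ⟨r, hr, h1, h2⟩ := dd_lemA y hy R hR1 m hm hsm hR2
      obtain ⟨q, hq⟩ := hr
      refine ⟨q, r, by rw [hq]; ring, h1, h2, ?_, ?_⟩
      · have hqd : q ∣ m := ⟨r, by rw [hq]; ring⟩
        exact IH j (by omega) q (hm.squarefree_of_dvd hqd)
          (fun p hp hd => hsm p hp (hd.trans hqd))
      · exact IH k (by omega) r (hm.squarefree_of_dvd ⟨q, hq⟩)
          (fun p hp hd => hsm p hp (hd.trans ⟨q, hq⟩))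

set_option maxHeartbeats 1000000 in
/-- The key auxiliary induction. -/
private lemma dd_aux (y z : ℝ) (hy : 1 ≤ y) (hzy : y ≤ z) :
    ∀ i : ℕ, ∀ n : ℕ, Squarefree n → (∀ p : ℕ, p.Prime → p ∣ n → (p : ℝ) ≤ z) →
    z ^ i / y ≤ (smallProd y n : ℝ) → DD y i n := by
  intro i
  induction i using Nat.strong_induction_on with
  | _ i IH =>
    match i with
    | 0 => intro n _ _ _; rw [DD]; trivial
    | (i+1) =>
      intro n hn hsmooth hprod
      rw [DD]
      intro j k hjk R hR1 hR2
      have hy0 : (0:ℝ) < y := by linarith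
      have hz1 : (1:ℝ) ≤ z := hy.trans hzy
      have hz0 : (0:ℝ) < z := by linarith
      have hn0 : n ≠ 0 := hn.ne_zero
      obtain ⟨P, hPdef⟩ : ∃ P : ℕ, smallProd y n = P := ⟨_, rfl⟩
      rw [hPdef] at hprod
      have hPd : P ∣ n := hPdef ▸ smallProd_dvd y n
      have hPsf : Squarefree P := hn.squarefree_of_dvd hPd
      have hPsm : ∀ p : ℕ, p.Prime → p ∣ P → (p : ℝ) ≤ y := hPdef ▸ smallProd_smooth y n
      have hprod' : z ^ (i+1) ≤ y * P := by
        rw [div_le_iff₀ hy0] at hprod; linarith [hprod]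
      -- extract u
      have hzj1 : (1:ℝ) ≤ z ^ j := one_le_pow₀ hz1
      have hzk1 : (1:ℝ) ≤ z ^ k := one_le_pow₀ hz1
      have hzsplit : z ^ (i+1) = z ^ j * z ^ (k+1) := by
        rw [← pow_add]; congr 1; omega
      have hzk1pos : (0:ℝ) < z ^ (k+1) := pow_pos hz0 _
      have hzjpos : (0:ℝ) < z ^ j := pow_pos hz0 _
      have hzkpos : (0:ℝ) < z ^ k := pow_pos hz0 _
      have hBu : z ^ j ≤ y * P := by
        have h1 : z ^ j ≤ z ^ j * z ^ (k+1) := le_mul_of_one_le_right hzjpos.le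
          (one_le_pow₀ hz1)
        rw [hzsplit] at hprod'; linarith
      obtain ⟨u, huP, hu1, hu2⟩ := dd_lemA y hy (z ^ j) hzj1 P hPsf hPsm hBu
      obtain ⟨P₁, hP1⟩ := huP
      have hP1d : P₁ ∣ P := ⟨u, by rw [mul_comm] at hP1; exact hP1⟩
      have hP1sf : Squarefree P₁ := hPsf.squarefree_of_dvd hP1d
      have hP1sm : ∀ p : ℕ, p.Prime → p ∣ P₁ → (p : ℝ) ≤ y :=
        fun p hp hd => hPsm p hp (hd.trans hP1d)
      have hPcast : (P : ℝ) = (u : ℝ) * P₁ := by exact_mod_cast congrArg Nat.cast hP1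
      have hP1low : z ^ (k+1) / y ≤ (P₁ : ℝ) := by
        have h1 : z ^ j * (z ^ (k+1) / y) ≤ z ^ j * P₁ := by
          calc z ^ j * (z ^ (k+1) / y) = z ^ (i+1) / y := by rw [hzsplit]; ring
          _ ≤ (P : ℝ) := hprod
          _ = (u : ℝ) * P₁ := hPcast
          _ ≤ z ^ j * P₁ := mul_le_mul_of_nonneg_right hu2 (Nat.cast_nonneg _)
        exact le_of_mul_le_mul_left h1 hzjpos
      have hP1ylow : z ^ (k+1) ≤ y * P₁ := by
        rw [div_le_iff₀ hy0] at hP1low; linarith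
      -- extract v
      have hBv : z ^ k ≤ y * P₁ := by
        have h1 : z ^ k ≤ z ^ (k+1) := by
          calc z ^ k = 1 * z ^ k := (one_mul _).symm
          _ ≤ z * z ^ k := mul_le_mul_of_nonneg_right hz1 hzkpos.le
          _ = z ^ (k+1) := by ring
        linarith
      obtain ⟨v, hvP1, hv1, hv2⟩ := dd_lemA y hy (z ^ k) hzk1 P₁ hP1sf hP1sm hBv
      obtain ⟨P₂, hP2⟩ := hvP1
      have hP2d : P₂ ∣ P₁ := ⟨v, by rw [mul_comm] at hP2; exact hP2⟩
      have hP2sm : ∀ p : ℕ, p.Prime → p ∣ P₂ → (p : ℝ) ≤ y :=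
        fun p hp hd => hP1sm p hp (hd.trans hP2d)
      have hP1cast : (P₁ : ℝ) = (v : ℝ) * P₂ := by exact_mod_cast congrArg Nat.cast hP2
      have hP2low : z / y ≤ (P₂ : ℝ) := by
        have h1 : z ^ k * (z / y) ≤ z ^ k * P₂ := by
          calc z ^ k * (z / y) = z ^ (k+1) / y := by ring
          _ ≤ (P₁ : ℝ) := hP1low
          _ = (v : ℝ) * P₂ := hP1cast
          _ ≤ z ^ k * P₂ := mul_le_mul_of_nonneg_right hv2 (Nat.cast_nonneg _)
        exact le_of_mul_le_mul_left h1 hzkpos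
      have hP2ylow : z ≤ y * P₂ := by rw [div_le_iff₀ hy0] at hP2low; linarith
      obtain ⟨Q, hQ⟩ := hPd
      have hnfac : n = u * (v * (P₂ * Q)) := by rw [hQ, hP1, hP2]; ring
      -- positivity
      have hu0 : u ≠ 0 := by rintro rfl; rw [hnfac] at hn0; simp at hn0
      have hv0 : v ≠ 0 := by rintro rfl; rw [hnfac] at hn0; simp at hn0
      have hQ0 : Q ≠ 0 := by rintro rfl; rw [hnfac] at hn0; simp at hn0
      have hP20 : P₂ ≠ 0 := by rintro rfl; rw [hnfac] at hn0; simp at hn0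
      have hvpos : (0:ℝ) < v := by exact_mod_cast Nat.pos_of_ne_zero hv0
      have hupos : (0:ℝ) < u := by exact_mod_cast Nat.pos_of_ne_zero hu0
      have husf : Squarefree u := hPsf.squarefree_of_dvd ⟨P₁, hP1⟩
      have husm : ∀ p : ℕ, p.Prime → p ∣ u → (p : ℝ) ≤ y :=
        fun p hp hd => hPsm p hp (hd.trans ⟨P₁, hP1⟩)
      have hvsf : Squarefree v := hP1sf.squarefree_of_dvd ⟨P₂, hP2⟩
      have hvsm : ∀ p : ℕ, p.Prime → p ∣ v → (p : ℝ) ≤ y :=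
        fun p hp hd => hP1sm p hp (hd.trans ⟨P₂, hP2⟩)
      by_cases hc1 : R ≤ y * P₁
      · -- Case 1: take r a y-smooth divisor of P₁
        obtain ⟨r, hrP1, hr1, hr2⟩ := dd_lemA y hy R hR1 P₁ hP1sf hP1sm hc1
        obtain ⟨s, hs⟩ := hrP1
        have heq : n = (u * (s * Q)) * r := by rw [hQ, hP1, hs]; ring
        have hqd : u * (s * Q) ∣ n := ⟨r, heq⟩
        have hq0 : u * (s * Q) ≠ 0 := by rintro h0; rw [h0, zero_mul] at heq; exact hn0 heq
        refine ⟨u * (s * Q), r, heq, hr1, hr2, ?_, ?_⟩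
        · refine IH j (by omega) _ (hn.squarefree_of_dvd hqd)
            (fun p hp hd => hsmooth p hp (hd.trans hqd)) ?_
          exact dd_lemE' y (z ^ j) hy0 u _ (dvd_mul_right _ _) hq0 husf husm hu1
        · exact dd_lemC y hy k r (hP1sf.squarefree_of_dvd ⟨s, hs⟩)
            (fun p hp hd => hP1sm p hp (hd.trans ⟨s, hs⟩))
      · push_neg at hc1
        have hP1cast' : y * (P₁ : ℝ) < R := hc1
        by_cases hc2 : R ≤ y * ((v : ℝ) * ((P₂ : ℝ) * (Q : ℝ)))
        · -- Case 2: glue lemma on P₂ * Q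
          have hPQd : P₂ * Q ∣ n := ⟨u * v, by rw [hnfac]; ring⟩
          have hPQsf : Squarefree (P₂ * Q) := hn.squarefree_of_dvd hPQd
          have hsb : ∀ p : ℕ, p.Prime → p ∣ Q → (p : ℝ) ≤ y * P₂ := by
            intro p hp hd
            have hQd : Q ∣ n := ⟨u * v * P₂, by rw [hnfac]; ring⟩
            exact (hsmooth p hp (hd.trans hQd)).trans hP2ylow
          have hvR : (v : ℝ) ≤ R := by
            have h1 : (v : ℝ) ≤ z ^ k := hv2
            have h2 : z ^ k ≤ z ^ (k+1) := by
              calc z ^ k = 1 * z ^ k := (one_mul _).symm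
              _ ≤ z * z ^ k := mul_le_mul_of_nonneg_right hz1 hzkpos.le
              _ = z ^ (k+1) := by ring
            linarith
          have hB1' : 1 ≤ R / v := by rw [le_div_iff₀ hvpos]; linarith
          have hB2' : R / v ≤ y * ((P₂ : ℝ) * (Q : ℝ)) := by
            rw [div_le_iff₀ hvpos]
            nlinarith [hc2]
          obtain ⟨w, hwPQ, hw1, hw2⟩ := dd_lemB y hy P₂ Q hPQsf hP2sm hsb (R / v) hB1' hB2'
          obtain ⟨t, ht⟩ := hwPQ
          have heq : n = (u * t) * (v * w) := by rw [hnfac, ht]; ring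
          have hqd : u * t ∣ n := ⟨v * w, heq⟩
          have hrd : v * w ∣ n := ⟨u * t, by rw [heq]; ring⟩
          have hq0 : u * t ≠ 0 := by rintro h0; rw [h0, zero_mul] at heq; exact hn0 heq
          have hr0 : v * w ≠ 0 := by
            rintro h0; rw [h0, mul_zero] at heq; exact hn0 heq
          refine ⟨u * t, v * w, heq, ?_, ?_, ?_, ?_⟩
          · have h1' : (v : ℝ) * (y⁻¹ * (R / v)) ≤ (v : ℝ) * w :=
              mul_le_mul_of_nonneg_left hw1 hvpos.le
            have h2' : (v : ℝ) * (y⁻¹ * (R / v)) = y⁻¹ * R := by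
              field_simp
            push_cast
            linarith
          · have h1' : (v : ℝ) * w ≤ (v : ℝ) * (R / v) :=
              mul_le_mul_of_nonneg_left hw2 hvpos.le
            have h2' : (v : ℝ) * (R / v) = R := by field_simp
            push_cast
            linarith
          · refine IH j (by omega) _ (hn.squarefree_of_dvd hqd)
              (fun p hp hd => hsmooth p hp (hd.trans hqd)) ?_
            exact dd_lemE' y (z ^ j) hy0 u _ (dvd_mul_right _ _) hq0 husf husm hu1
          · refine IH k (by omega) _ (hn.squarefree_of_dvd hrd)
              (fun p hp hd => hsmooth p hp (hd.trans hrd)) ?_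
            exact dd_lemE' y (z ^ k) hy0 v _ (dvd_mul_right _ _) hr0 hvsf hvsm hv1
        · -- Case 3: take q a y-smooth divisor of u
          push_neg at hc2
          have hR0 : (0:ℝ) < R := by linarith
          have hB1' : 1 ≤ y * n / R := by
            rw [le_div_iff₀ hR0]; linarith
          have hncast : (n : ℝ) = (u : ℝ) * ((v : ℝ) * ((P₂ : ℝ) * Q)) := by
            exact_mod_cast congrArg Nat.cast hnfac
          have hB2' : y * n / R ≤ y * u := by
            rw [div_le_iff₀ hR0]
            have hXpos : (0:ℝ) < (v : ℝ) * ((P₂ : ℝ) * Q) := by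
              have h1 : (0:ℝ) < (P₂ : ℝ) := by exact_mod_cast Nat.pos_of_ne_zero hP20
              have h2 : (0:ℝ) < (Q : ℝ) := by exact_mod_cast Nat.pos_of_ne_zero hQ0
              positivity
            have hx : (v : ℝ) * ((P₂ : ℝ) * Q) < R := by
              have h3 : (v : ℝ) * ((P₂ : ℝ) * Q) ≤ y * ((v : ℝ) * ((P₂ : ℝ) * Q)) :=
                le_mul_of_one_le_left hXpos.le hy
              linarith [hc2]
            have h5 : (u : ℝ) * ((v : ℝ) * ((P₂ : ℝ) * Q)) ≤ (u : ℝ) * R :=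
              mul_le_mul_of_nonneg_left hx.le hupos.le
            calc y * (n : ℝ) = y * ((u : ℝ) * ((v : ℝ) * ((P₂ : ℝ) * Q))) := by rw [hncast]
            _ ≤ y * ((u : ℝ) * R) := mul_le_mul_of_nonneg_left h5 hy0.le
            _ = y * u * R := by ring
          obtain ⟨q, hqu, hq1, hq2⟩ := dd_lemA y hy (y * n / R) hB1' u husf husm hB2'
          obtain ⟨s, hsu⟩ := hqu
          have heq : n = q * (s * (v * (P₂ * Q))) := by rw [hnfac, hsu]; ring
          have hrd : s * (v * (P₂ * Q)) ∣ n := ⟨q, by rw [heq]; ring⟩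
          have hr0 : s * (v * (P₂ * Q)) ≠ 0 := by
            rintro h0; rw [h0, mul_zero] at heq; exact hn0 heq
          have hqpos : (0:ℝ) < q := by
            have : q ≠ 0 := by rintro rfl; rw [zero_mul] at heq; exact hn0 heq
            exact_mod_cast Nat.pos_of_ne_zero this
          have hncast2 : (n : ℝ) = (q : ℝ) * (s * (v * ((P₂ : ℝ) * Q))) := by
            exact_mod_cast congrArg Nat.cast heq
          have hq1' : (n : ℝ) / R ≤ q := by
            have hyne : y ≠ 0 := ne_of_gt hy0
            have : y⁻¹ * (y * n / R) = (n : ℝ) / R := by field_simp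
            linarith [this ▸ hq1]
          refine ⟨q, s * (v * (P₂ * Q)), heq, ?_, ?_, ?_, ?_⟩
          · -- y⁻¹ * R ≤ r
            have h1 : (q : ℝ) * R ≤ y * n := by
              rw [le_div_iff₀ hR0] at hq2
              linarith
            have h2 : y * (n : ℝ) = (q : ℝ) * (y * ((s : ℝ) * ((v : ℝ) * ((P₂ : ℝ) * Q)))) := by
              rw [hncast2]; ring
            have h3 : R ≤ y * ((s : ℝ) * ((v : ℝ) * ((P₂ : ℝ) * Q))) := by
              rw [h2] at h1
              exact le_of_mul_le_mul_left h1 hqpos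
            rw [inv_mul_le_iff₀ hy0]
            push_cast
            linarith
          · -- r ≤ R
            have h1 : (n : ℝ) ≤ (q : ℝ) * R := by
              rw [div_le_iff₀ hR0] at hq1'
              linarith [hq1']
            have h2 : (q : ℝ) * ((s : ℝ) * ((v : ℝ) * ((P₂ : ℝ) * Q))) ≤ (q : ℝ) * R := by
              rw [← hncast2]; exact h1
            have h3 := le_of_mul_le_mul_left h2 hqpos
            push_cast
            linarith
          · exact dd_lemC y hy j q (husf.squarefree_of_dvd ⟨s, hsu⟩)
              (fun p hp hd => husm p hp (hd.trans ⟨s, hsu⟩))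
          · refine IH k (by omega) _ (hn.squarefree_of_dvd hrd)
              (fun p hp hd => hsmooth p hp (hd.trans hrd)) ?_
            refine dd_lemE' y (z ^ k) hy0 v _ ⟨s * (P₂ * Q), by ring⟩ hr0 hvsf hvsm hv1

private lemma dd_prod_conv (y : ℝ) (m : ℕ) :
    (∏ p ∈ m.primeFactors.filter (fun p => (p : ℝ) ≤ y), (p : ℝ)) =
    ((smallProd y m : ℕ) : ℝ) := by
  have h : (m.primeFactors.filter (fun p => (p : ℝ) ≤ y) : Finset ℝ) =
      (m.primeFactors.filter (fun p : ℕ => (p : ℝ) ≤ y)).image (Nat.cast : ℕ → ℝ) := by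
    ext x
    simp [Finset.mem_filter, Finset.mem_image, Finset.instMonad, Finset.sup_eq_biUnion]
    aesop
  rw [h, Finset.prod_image (fun a _ b _ hab => Nat.cast_injective hab)]
  rw [smallProd]
  push_cast
  rfl

end Aux

open scoped Classical in
/-- If `n` is squarefree and `z`-smooth with `z ≥ y ≥ 1`, and the product of the primes
`p ∣ n` with `p ≤ y` is at least `zⁱ/y`, then `n` is `i`-tuply `y`-densely divisible. -/
theorem squarefree_smooth_densely_divisible (y z : ℝ) (hy : 1 ≤ y) (hzy : y ≤ z)
    (n : ℕ) (hn : Squarefree n)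
    (hsmooth : ∀ p : ℕ, p.Prime → p ∣ n → (p : ℝ) ≤ z) (i : ℕ)
    (hprod : z ^ i / y ≤ ∏ p ∈ (n.primeFactors.filter (fun p => (p : ℝ) ≤ y) : Finset ℕ), (p : ℝ)) :
    DD y i n := by
  have hc : (∏ p ∈ (n.primeFactors.filter (fun p => (p : ℝ) ≤ y) : Finset ℕ), (p : ℝ)) =
      ((smallProd y n : ℕ) : ℝ) := by
    rw [smallProd, Nat.cast_prod]; rfl
  rw [hc] at hprod
  exact dd_aux y z hy hzy i n hn hsmooth hprod
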